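/- arXiv:2212.01988 — 2 statements merged into one kernel-verified Lean document; each statement's English description precedes it below -/
import Mathlib

section
/- Let λ ∈ {1,−1}, L₁ > 0, T > 0, N ≥ 1 and u₀ ∈ ℍ_N. Let (τ_m)_{m≥0} be positive reals and define recursively u_{m+1} = S^N(τ_m)(u_m + iλτ_m|u_m|²u_m). If τ_m‖u_m‖⁶_{L⁶(0,1)} ≤ L₁‖u_m‖² for every m, then ‖u_{m+1}‖² ≤ (1 + L₁τ_m)‖u_m‖² for every m, and for every m with τ₀ + ⋯ + τ_{m−1} ≤ T one has ‖u_m‖² ≤ e^{L₁T}‖u₀‖². -/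
open MeasureTheory Complex Real Set
open scoped ENNReal

noncomputable section

/-- Lebesgue measure restricted to the interval `(0,1)`. -/
def μ01 : Measure ℝ := volume.restrict (Ioo (0:ℝ) 1)

/-- The `L^p((0,1);ℂ)` norm. -/
def lpnorm (p : ℝ≥0∞) (u : ℝ → ℂ) : ℝ := (eLpNorm u p μ01).toReal

/-- The pointwise cubic nonlinearity `|u|²u`. -/
def cubic (u : ℝ → ℂ) : ℝ → ℂ := fun x => ((‖u x‖ ^ 2 : ℝ) : ℂ) * u x

/-- The Dirichlet sine eigenfunctions `e_k(x) = √2 sin(kπx)`, as elements of `L²((0,1);ℂ)`. -/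
def eFun (k : ℕ) : ℝ → ℂ := fun x => ((Real.sqrt 2 * Real.sin (k * Real.pi * x) : ℝ) : ℂ)

/-- The `k`-th Fourier sine coefficient `∫₀¹ u e_k`. -/
def coeff (k : ℕ) (u : ℝ → ℂ) : ℂ := ∫ x in Ioo (0:ℝ) 1, u x * eFun k x

/-- The spectral Galerkin projection `P^N`. -/
def PN (N : ℕ) (u : ℝ → ℂ) : ℝ → ℂ :=
  fun x => ∑ k ∈ Finset.Icc 1 N, coeff k u * eFun k x

/-- The truncated Schrödinger group `S^N(t) = P^N e^{itΔ}`. -/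
def SN (N : ℕ) (t : ℝ) (u : ℝ → ℂ) : ℝ → ℂ :=
  fun x => ∑ k ∈ Finset.Icc 1 N,
    Complex.exp (-Complex.I * (((k:ℝ)^2 * Real.pi^2 * t : ℝ) : ℂ)) * coeff k u * eFun k x

/-- The space `ℍ_N`: the complex span of `e_1, …, e_N`. -/
def HN (N : ℕ) : Set (ℝ → ℂ) :=
  {u | ∃ c : ℕ → ℂ, u = fun x => ∑ k ∈ Finset.Icc 1 N, c k * eFun k x}

/-- The discrete Dirichlet Laplacian on `ℍ_N`, determined by `Δ_N e_k = −k²π² e_k`. -/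
def DeltaN (N : ℕ) (u : ℝ → ℂ) : ℝ → ℂ :=
  fun x => ∑ k ∈ Finset.Icc 1 N, (-(((k:ℝ)^2 * Real.pi^2 : ℝ) : ℂ)) * coeff k u * eFun k x

/-- The squared `ℍ¹` norm `‖u‖² + ‖u′‖²`. -/
def h1normSq (u : ℝ → ℂ) : ℝ := (lpnorm 2 u)^2 + (lpnorm 2 (deriv u))^2

/-- The Hamiltonian `ℋ(u) = ½‖u′‖² − (λ/4)‖u‖⁴_{L⁴}`. -/
def Ham (l : ℝ) (u : ℝ → ℂ) : ℝ :=
  (1/2) * (lpnorm 2 (deriv u))^2 - (l/4) * (lpnorm 4 u)^4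

/-- The functional `f(u) = ‖u″‖² + λ Re ∫₀¹ u″ conj(|u|²u)`. -/
def fFun (l : ℝ) (u : ℝ → ℂ) : ℝ :=
  (lpnorm 2 (deriv (deriv u)))^2
    + l * (∫ x in Ioo (0:ℝ) 1, deriv (deriv u) x * (starRingEnd ℂ) (cubic u x)).re

/-! ### Auxiliary machinery -/

section Aux

local notation "⟪" x ", " y "⟫" => @inner ℂ _ _ x y

instance : IsFiniteMeasure μ01 := by
  constructor
  rw [μ01, Measure.restrict_apply_univ, Real.volume_Ioo]
  norm_num

/-- Bounded continuous functions. -/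
def Bdd (w : ℝ → ℂ) : Prop := Continuous w ∧ ∃ C : ℝ, ∀ x, ‖w x‖ ≤ C

lemma Bdd.memLp {w : ℝ → ℂ} (hw : Bdd w) (p : ℝ≥0∞) : MemLp w p μ01 := by
  obtain ⟨hc, C, hC⟩ := hw
  exact MemLp.of_bound hc.aestronglyMeasurable C (Filter.Eventually.of_forall hC)

lemma eFun_cont (k : ℕ) : Continuous (eFun k) := by
  unfold eFun
  fun_prop

lemma eFun_le (k : ℕ) (x : ℝ) : ‖eFun k x‖ ≤ Real.sqrt 2 := by
  have h : ‖eFun k x‖ = |Real.sqrt 2 * Real.sin (k * Real.pi * x)| := by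
    rw [show eFun k x = ((Real.sqrt 2 * Real.sin (k * Real.pi * x) : ℝ) : ℂ) from rfl,
      Complex.norm_real, Real.norm_eq_abs]
  rw [h, abs_mul, _root_.abs_of_nonneg (Real.sqrt_nonneg 2)]
  nlinarith [Real.abs_sin_le_one (k * Real.pi * x), Real.sqrt_nonneg 2]

lemma bdd_eFun (k : ℕ) : Bdd (eFun k) :=
  ⟨eFun_cont k, ⟨Real.sqrt 2, eFun_le k⟩⟩

lemma bdd_ofHN {N : ℕ} {u : ℝ → ℂ} (hu : u ∈ HN N) : Bdd u := by
  obtain ⟨c, rfl⟩ := hu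
  refine ⟨continuous_finset_sum _ fun k _ => continuous_const.mul (eFun_cont k), ?_⟩
  refine ⟨∑ k ∈ Finset.Icc 1 N, ‖c k‖ * Real.sqrt 2, fun x => ?_⟩
  refine (norm_sum_le _ _).trans (Finset.sum_le_sum fun k _ => ?_)
  rw [norm_mul]
  exact mul_le_mul_of_nonneg_left (eFun_le k x) (norm_nonneg _)

lemma bdd_cubic {u : ℝ → ℂ} (hu : Bdd u) : Bdd (cubic u) := by
  obtain ⟨hc, C, hC⟩ := hu
  refine ⟨by unfold _root_.cubic; fun_prop, ⟨C^2 * C, fun x => ?_⟩⟩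
  have h0 : (0:ℝ) ≤ ‖u x‖ := norm_nonneg _
  have : ‖cubic u x‖ = ‖u x‖^2 * ‖u x‖ := by
    simp [_root_.cubic, Complex.norm_real, _root_.abs_of_nonneg (sq_nonneg (‖u x‖))]
  rw [this]
  have h1 : ‖u x‖^2 ≤ C^2 := by nlinarith [hC x]
  nlinarith [hC x]

lemma bdd_step {u : ℝ → ℂ} (hu : Bdd u) (a : ℂ) :
    Bdd (fun x => u x + a * cubic u x) := by
  obtain ⟨hc, C, hC⟩ := hu
  obtain ⟨hc', C', hC'⟩ := bdd_cubic ⟨hc, C, hC⟩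
  exact ⟨hc.add (continuous_const.mul hc'), ⟨C + ‖a‖ * C', fun x => by
    refine (norm_add_le _ _).trans ?_
    have := hC' x
    have := hC x
    rw [norm_mul]
    nlinarith [norm_nonneg a]⟩⟩

lemma integrable_norm_pow {w : ℝ → ℂ} (hw : Bdd w) (n : ℕ) :
    Integrable (fun x => ‖w x‖ ^ n) μ01 := by
  obtain ⟨hc, C, hC⟩ := hw
  refine memLp_one_iff_integrable.mp (MemLp.of_bound ?_ (C^n)
    (Filter.Eventually.of_forall fun x => ?_))
  · exact ((hc.norm).pow n).aestronglyMeasurable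
  · rw [Real.norm_eq_abs, _root_.abs_of_nonneg (pow_nonneg (norm_nonneg _) n)]
    exact pow_le_pow_left₀ (norm_nonneg _) (hC x) n

/-- `lpnorm n` to the `n`-th power is the integral of `‖f‖^n`. -/
lemma lpnorm_pow_eq {n : ℕ} (hn : n ≠ 0) {f : ℝ → ℂ} (hf : MemLp f n μ01) :
    (lpnorm n f) ^ n = ∫ a, ‖f a‖ ^ n ∂μ01 := by
  have hn0 : ((n : ℝ≥0∞)) ≠ 0 := by exact_mod_cast (Nat.cast_ne_zero (R := ℝ≥0∞)).mpr hn
  have hnt : ((n : ℝ≥0∞)) ≠ ⊤ := by simp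
  rw [lpnorm, hf.eLpNorm_eq_integral_rpow_norm hn0 hnt]
  have htr : ((n : ℝ≥0∞)).toReal = (n : ℝ) := by simp
  have hX : (0:ℝ) ≤ ∫ a, ‖f a‖ ^ ((n : ℝ≥0∞)).toReal ∂μ01 :=
    integral_nonneg fun a => Real.rpow_nonneg (norm_nonneg _) _
  rw [ENNReal.toReal_ofReal (Real.rpow_nonneg hX _)]
  rw [← Real.rpow_natCast ((∫ a, ‖f a‖ ^ ((n : ℝ≥0∞)).toReal ∂μ01) ^ ((n : ℝ≥0∞)).toReal⁻¹) n,
    ← Real.rpow_mul hX]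
  have hne : ((n : ℝ≥0∞)).toReal⁻¹ * (n : ℝ) = 1 := by
    rw [htr]
    field_simp
  rw [hne, Real.rpow_one]
  refine integral_congr_ae (Filter.Eventually.of_forall fun a => ?_)
  show ‖f a‖ ^ ((n : ℝ≥0∞)).toReal = ‖f a‖ ^ n
  rw [htr, Real.rpow_natCast]

/-- The interval integral of `cos (n π x)` over `[0,1]` for nonzero integer `n` vanishes. -/
lemma integral_cos_int {n : ℤ} (hn : n ≠ 0) :
    ∫ x in (0:ℝ)..1, Real.cos ((n:ℝ) * Real.pi * x) = 0 := by
  have hc : ((n:ℝ) * Real.pi) ≠ 0 :=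
    mul_ne_zero (Int.cast_ne_zero.2 hn) Real.pi_ne_zero
  have hder : ∀ x ∈ Set.uIcc (0:ℝ) 1,
      HasDerivAt (fun y => Real.sin ((n:ℝ) * Real.pi * y) / ((n:ℝ) * Real.pi))
        (Real.cos ((n:ℝ) * Real.pi * x)) x := by
    intro x _
    have h1 : HasDerivAt (fun y : ℝ => (n:ℝ) * Real.pi * y) ((n:ℝ) * Real.pi) x := by
      simpa using (hasDerivAt_id x).const_mul ((n:ℝ) * Real.pi)
    have h2 := (h1.sin).div_const ((n:ℝ) * Real.pi)
    rw [mul_div_cancel_right₀ _ hc] at h2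
    exact h2
  rw [intervalIntegral.integral_eq_sub_of_hasDerivAt hder
    ((by fun_prop : Continuous fun x => Real.cos ((n:ℝ) * Real.pi * x)).intervalIntegrable 0 1)]
  have h1 : Real.sin ((n:ℝ) * Real.pi * 1) = 0 := by
    rw [mul_one]; exact Real.sin_int_mul_pi n
  have h0 : Real.sin ((n:ℝ) * Real.pi * 0) = 0 := by simp
  rw [h1, h0]
  simp

/-- Orthonormality of the sine system, real version. -/
lemma sin_orth {j k : ℕ} (hj : 1 ≤ j) (hk : 1 ≤ k) :
    (∫ x in (0:ℝ)..1,
      (Real.sqrt 2 * Real.sin (j * Real.pi * x)) * (Real.sqrt 2 * Real.sin (k * Real.pi * x)))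
    = if j = k then 1 else 0 := by
  have hid : ∀ x : ℝ,
      (Real.sqrt 2 * Real.sin (j * Real.pi * x)) * (Real.sqrt 2 * Real.sin (k * Real.pi * x))
      = Real.cos ((((j:ℤ) - k : ℤ):ℝ) * Real.pi * x)
        - Real.cos ((((j:ℤ) + k : ℤ):ℝ) * Real.pi * x) := by
    intro x
    have h2 : Real.sqrt 2 * Real.sqrt 2 = 2 := Real.mul_self_sqrt (by norm_num)
    have ha : ((((j:ℤ) - k : ℤ):ℝ)) * Real.pi * x
        = (j:ℝ) * Real.pi * x - (k:ℝ) * Real.pi * x := by push_cast; ring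
    have hb : ((((j:ℤ) + k : ℤ):ℝ)) * Real.pi * x
        = (j:ℝ) * Real.pi * x + (k:ℝ) * Real.pi * x := by push_cast; ring
    rw [ha, hb, Real.cos_sub, Real.cos_add]
    linear_combination (Real.sin ((j:ℝ) * Real.pi * x) * Real.sin ((k:ℝ) * Real.pi * x)) * h2
  rw [intervalIntegral.integral_congr (g := fun x =>
      Real.cos ((((j:ℤ) - k : ℤ):ℝ) * Real.pi * x)
        - Real.cos ((((j:ℤ) + k : ℤ):ℝ) * Real.pi * x)) (fun x _ => hid x)]
  rw [intervalIntegral.integral_sub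
    ((by fun_prop : Continuous fun x => Real.cos ((((j:ℤ) - k : ℤ):ℝ) * Real.pi * x)).intervalIntegrable 0 1)
    ((by fun_prop : Continuous fun x => Real.cos ((((j:ℤ) + k : ℤ):ℝ) * Real.pi * x)).intervalIntegrable 0 1)]
  have h2 : ∫ x in (0:ℝ)..1, Real.cos ((((j:ℤ) + k : ℤ):ℝ) * Real.pi * x) = 0 :=
    integral_cos_int (by omega)
  rw [h2, sub_zero]
  by_cases h : j = k
  · subst h
    have : ((j:ℤ) - j : ℤ) = 0 := by ring
    rw [this, if_pos rfl]
    norm_num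
  · rw [if_neg h]
    exact integral_cos_int (by omega)

/-- The sine eigenfunctions as elements of `L²((0,1);ℂ)`. -/
def epsLp (k : ℕ) : Lp ℂ 2 μ01 := ((bdd_eFun k).memLp 2).toLp (eFun k)

lemma integral_ofReal'' {f : ℝ → ℝ} {μ : Measure ℝ} :
    ∫ x, ((f x : ℝ) : ℂ) ∂μ = ((∫ x, f x ∂μ : ℝ) : ℂ) :=
  integral_ofReal

lemma epsLp_coe (k : ℕ) : ⇑(epsLp k) =ᵐ[μ01] eFun k :=
  MemLp.coeFn_toLp ((bdd_eFun k).memLp 2)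

lemma inner_eps (k : ℕ) {w : ℝ → ℂ} (hw : MemLp w 2 μ01) :
    ⟪epsLp k, hw.toLp w⟫ = coeff k w := by
  rw [L2.inner_def]
  have hcoe : coeff k w = ∫ a, w a * eFun k a ∂μ01 := rfl
  rw [hcoe]
  refine integral_congr_ae ?_
  filter_upwards [epsLp_coe k, MemLp.coeFn_toLp hw]
    with a h1 h2
  rw [RCLike.inner_apply]
  show (hw.toLp w) a * (starRingEnd ℂ) (epsLp k a) = w a * eFun k a
  rw [h1, h2, eFun, Complex.conj_ofReal]

lemma eps_orth : Orthonormal ℂ (fun j : ℕ => epsLp (j + 1)) := by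
  rw [orthonormal_iff_ite]
  intro a b
  have h1 : ⟪epsLp (a+1), epsLp (b+1)⟫ = coeff (a+1) (eFun (b+1)) :=
    inner_eps (a+1) ((bdd_eFun (b+1)).memLp 2)
  rw [h1]
  have hcoe : coeff (a+1) (eFun (b+1))
      = ∫ x in Ioo (0:ℝ) 1, ((Real.sqrt 2 * Real.sin ((b+1 : ℕ) * Real.pi * x)
          * (Real.sqrt 2 * Real.sin ((a+1 : ℕ) * Real.pi * x)) : ℝ) : ℂ) := by
    refine integral_congr_ae (Filter.Eventually.of_forall fun x => ?_)
    show eFun (b+1) x * eFun (a+1) x = _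
    rw [eFun, eFun]
    push_cast
    ring
  have hiv : (∫ x in Ioo (0:ℝ) 1, (Real.sqrt 2 * Real.sin ((b+1 : ℕ) * Real.pi * x)
        * (Real.sqrt 2 * Real.sin ((a+1 : ℕ) * Real.pi * x))))
      = ∫ x in (0:ℝ)..1, (Real.sqrt 2 * Real.sin ((b+1 : ℕ) * Real.pi * x)
        * (Real.sqrt 2 * Real.sin ((a+1 : ℕ) * Real.pi * x))) := by
    rw [intervalIntegral.integral_of_le zero_le_one, integral_Ioc_eq_integral_Ioo]
  have hre : (∫ x in Ioo (0:ℝ) 1, (Real.sqrt 2 * Real.sin ((b+1 : ℕ) * Real.pi * x)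
        * (Real.sqrt 2 * Real.sin ((a+1 : ℕ) * Real.pi * x))))
      = if a = b then 1 else 0 := by
    rw [hiv, sin_orth (by omega) (by omega)]
    by_cases h : a = b
    · subst h; simp
    · rw [if_neg (by omega), if_neg h]
  rw [hcoe, integral_ofReal'', hre]
  split_ifs <;> simp

lemma coeFn_comb (s : Finset ℕ) (c : ℕ → ℂ) :
    ⇑(∑ k ∈ s, c k • epsLp k) =ᵐ[μ01] fun x => ∑ k ∈ s, c k * eFun k x := by
  classical
  induction s using Finset.induction_on with
  | empty => simp only [Finset.sum_empty]; exact Lp.coeFn_zero (E := ℂ) (p := 2) (μ := μ01)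
  | @insert a s ha ih =>
    rw [Finset.sum_insert ha]
    filter_upwards [Lp.coeFn_add (c a • epsLp a) (∑ k ∈ s, c k • epsLp k),
      Lp.coeFn_smul (c a) (epsLp a),
      epsLp_coe a, ih] with x h1 h2 h3 h4
    have h1' : (c a • epsLp a + ∑ k ∈ s, c k • epsLp k) x
        = (c a • epsLp a) x + (∑ k ∈ s, c k • epsLp k) x := h1
    have h2' : (c a • epsLp a) x = c a • (epsLp a) x := h2
    rw [h1', h2', h4, smul_eq_mul, h3, Finset.sum_insert ha]

lemma sum_Icc_to_range {M : Type*} [AddCommMonoid M] (N : ℕ) (f : ℕ → M) :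
    ∑ k ∈ Finset.Icc 1 N, f k = ∑ j ∈ Finset.range N, f (j+1) := by
  rw [← Finset.Ico_add_one_right_eq_Icc, Finset.sum_Ico_eq_sum_range]
  exact Finset.sum_congr (by rw [Nat.add_sub_cancel]) (fun j _ => by rw [Nat.add_comm])

/-- The key estimate: the Galerkin evolution does not increase the `L²` norm. -/
lemma sn_sq_le (N : ℕ) (t : ℝ) {w : ℝ → ℂ} (hw : Bdd w) :
    (lpnorm 2 (SN N t w))^2 ≤ (lpnorm 2 w)^2 := by
  classical
  set c : ℕ → ℂ := fun k =>
    Complex.exp (-Complex.I * (((k:ℝ)^2 * Real.pi^2 * t : ℝ) : ℂ)) * coeff k w with hc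
  have hW : MemLp w 2 μ01 := hw.memLp 2
  set W : Lp ℂ 2 μ01 := hW.toLp w with hWdef
  set S : Lp ℂ 2 μ01 := ∑ k ∈ Finset.Icc 1 N, c k • epsLp k with hS
  have hae : ⇑S =ᵐ[μ01] SN N t w := by
    refine (coeFn_comb (Finset.Icc 1 N) c).trans ?_
    exact Filter.Eventually.of_forall fun x => rfl
  have hnorm : lpnorm 2 (SN N t w) = ‖S‖ := by
    rw [lpnorm, Lp.norm_def, eLpNorm_congr_ae hae]
  have hnormW : lpnorm 2 w = ‖W‖ := (Lp.norm_toLp w hW).symm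
  rw [hnorm, hnormW]
  -- compute ‖S‖²
  have hSre : S = ∑ j ∈ Finset.range N, c (j+1) • epsLp (j+1) :=
    sum_Icc_to_range N (fun k => c k • epsLp k)
  have hSsq : ‖S‖^2 = ∑ j ∈ Finset.range N, ‖c (j+1)‖^2 := by
    have h1 : (‖S‖:ℝ)^2 = RCLike.re (⟪S, S⟫) := norm_sq_eq_re_inner (𝕜 := ℂ) S
    have h2 : ⟪S, S⟫ = ∑ j ∈ Finset.range N, (starRingEnd ℂ) (c (j+1)) * c (j+1) := by
      rw [hSre]
      exact eps_orth.inner_sum (fun j => c (j+1)) (fun j => c (j+1)) (Finset.range N)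
    rw [h1, h2, map_sum]
    refine Finset.sum_congr rfl fun j _ => ?_
    rw [RCLike.conj_mul]
    norm_cast
  have hcnorm : ∀ j, ‖c (j+1)‖ = ‖coeff (j+1) w‖ := by
    intro j
    rw [hc]
    simp only [norm_mul]
    have hgen : ∀ r : ℝ, ‖Complex.exp (-Complex.I * ((r : ℝ) : ℂ))‖ = 1 := by
      intro r
      rw [Complex.norm_exp]
      have : (-Complex.I * ((r : ℝ) : ℂ)).re = 0 := by
        simp [Complex.mul_re]
      rw [this, Real.exp_zero]
    rw [hgen, one_mul]
  have hbessel : ∑ j ∈ Finset.range N, ‖coeff (j+1) w‖^2 ≤ ‖W‖^2 := by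
    have h := eps_orth.sum_inner_products_le (s := Finset.range N) W
    refine le_trans (le_of_eq ?_) h
    refine Finset.sum_congr rfl fun j _ => ?_
    rw [inner_eps (j+1) hW]
  rw [hSsq]
  refine le_trans (le_of_eq ?_) hbessel
  exact Finset.sum_congr rfl fun j _ => by rw [hcnorm j]

lemma point_sq {l τ : ℝ} (hl : l = 1 ∨ l = -1) (z : ℂ) :
    ‖z + Complex.I * (l:ℂ) * (τ:ℂ) * (((‖z‖^2 : ℝ) : ℂ) * z)‖^2
      = ‖z‖^2 + τ^2 * ‖z‖^6 := by
  have hz : z + Complex.I * (l:ℂ) * (τ:ℂ) * (((‖z‖^2 : ℝ) : ℂ) * z)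
      = (1 + ((l * τ * ‖z‖^2 : ℝ) : ℂ) * Complex.I) * z := by
    push_cast
    ring
  rw [hz, norm_mul, mul_pow]
  have h1 : ‖(1:ℂ) + ((l * τ * ‖z‖^2 : ℝ) : ℂ) * Complex.I‖^2
      = 1 + (l * τ * ‖z‖^2)^2 := by
    rw [Complex.sq_norm]
    have : (1:ℂ) + ((l * τ * ‖z‖^2 : ℝ) : ℂ) * Complex.I
        = ((1:ℝ):ℂ) + ((l * τ * ‖z‖^2 : ℝ) : ℂ) * Complex.I := by norm_num
    rw [this, Complex.normSq_add_mul_I]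
    norm_num
  rw [h1]
  have hll : l^2 = 1 := by rcases hl with h | h <;> rw [h] <;> norm_num
  have : (l * τ * ‖z‖^2)^2 = l^2 * (τ^2 * (‖z‖^2)^2) := by ring
  rw [this, hll]
  ring

/-- The mass identity for the nonlinear half-step. -/
lemma mass_v {w : ℝ → ℂ} (hw : Bdd w) {l τ : ℝ} (hl : l = 1 ∨ l = -1) :
    (lpnorm 2 (fun x => w x + Complex.I * (l:ℂ) * (τ:ℂ) * cubic w x))^2
      = (lpnorm 2 w)^2 + τ^2 * (lpnorm 6 w)^6 := by
  have hv : Bdd (fun x => w x + Complex.I * (l:ℂ) * (τ:ℂ) * cubic w x) :=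
    bdd_step hw _
  have h2 : ((2:ℕ) : ℝ≥0∞) = (2 : ℝ≥0∞) := by norm_num
  have h6 : ((6:ℕ) : ℝ≥0∞) = (6 : ℝ≥0∞) := by norm_num
  have e1 : (lpnorm 2 (fun x => w x + Complex.I * (l:ℂ) * (τ:ℂ) * cubic w x))^2
      = ∫ a, ‖w a + Complex.I * (l:ℂ) * (τ:ℂ) * cubic w a‖^2 ∂μ01 := by
    rw [← h2]
    exact lpnorm_pow_eq (by norm_num) (hv.memLp _)
  have e2 : (lpnorm 2 w)^2 = ∫ a, ‖w a‖^2 ∂μ01 := by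
    rw [← h2]
    exact lpnorm_pow_eq (by norm_num) (hw.memLp _)
  have e3 : (lpnorm 6 w)^6 = ∫ a, ‖w a‖^6 ∂μ01 := by
    rw [← h6]
    exact lpnorm_pow_eq (by norm_num) (hw.memLp _)
  rw [e1, e2, e3]
  have hpt : ∀ a, ‖w a + Complex.I * (l:ℂ) * (τ:ℂ) * cubic w a‖^2
      = ‖w a‖^2 + τ^2 * ‖w a‖^6 := by
    intro a
    exact point_sq hl (w a)
  rw [integral_congr_ae (Filter.Eventually.of_forall hpt)]
  rw [integral_add (integrable_norm_pow hw 2)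
    (((integrable_norm_pow hw 6)).const_mul (τ^2)), integral_const_mul]

end Aux

/-- a.s.-uniform boundedness of the mass of the deterministic part of the
adaptive splitting exponential Euler scheme. -/
theorem stmt1 (l : ℝ) (hl : l = 1 ∨ l = -1) (L₁ T : ℝ) (hL₁ : 0 < L₁) (hT : 0 < T)
    (N : ℕ) (hN : 1 ≤ N) (u₀ : ℝ → ℂ) (hu₀ : u₀ ∈ HN N)
    (τ : ℕ → ℝ) (hτ : ∀ m, 0 < τ m)
    (u : ℕ → ℝ → ℂ) (hu0 : u 0 = u₀)
    (hrec : ∀ m, u (m+1)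
      = SN N (τ m) (fun x => u m x + Complex.I * l * (τ m) * cubic (u m) x))
    (hstep : ∀ m, τ m * (lpnorm 6 (u m))^6 ≤ L₁ * (lpnorm 2 (u m))^2) :
    (∀ m, (lpnorm 2 (u (m+1)))^2 ≤ (1 + L₁ * τ m) * (lpnorm 2 (u m))^2) ∧
    (∀ m, (∑ j ∈ Finset.range m, τ j) ≤ T →
      (lpnorm 2 (u m))^2 ≤ Real.exp (L₁ * T) * (lpnorm 2 u₀)^2) := by
  have hHN : ∀ m, u m ∈ HN N := by
    intro m
    induction m with
    | zero => rw [hu0]; exact hu₀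
    | succ m _ => rw [hrec m]; exact ⟨_, rfl⟩
  have part1 : ∀ m, (lpnorm 2 (u (m+1)))^2 ≤ (1 + L₁ * τ m) * (lpnorm 2 (u m))^2 := by
    intro m
    have hb : Bdd (u m) := bdd_ofHN (hHN m)
    have hb' : Bdd (fun x => u m x + Complex.I * (l:ℂ) * ((τ m : ℝ):ℂ) * cubic (u m) x) :=
      bdd_step hb (Complex.I * (l:ℂ) * ((τ m : ℝ):ℂ))
    calc (lpnorm 2 (u (m+1)))^2
        = (lpnorm 2 (SN N (τ m)
            (fun x => u m x + Complex.I * (l:ℂ) * ((τ m : ℝ):ℂ) * cubic (u m) x)))^2 := by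
          rw [hrec m]
      _ ≤ (lpnorm 2 (fun x => u m x + Complex.I * (l:ℂ) * ((τ m : ℝ):ℂ) * cubic (u m) x))^2 :=
          sn_sq_le N (τ m) hb'
      _ = (lpnorm 2 (u m))^2 + (τ m)^2 * (lpnorm 6 (u m))^6 := mass_v hb hl
      _ ≤ (1 + L₁ * τ m) * (lpnorm 2 (u m))^2 := by
          have h1 := hstep m
          have h2 := (hτ m).le
          nlinarith
  refine ⟨part1, ?_⟩
  have key : ∀ m, (lpnorm 2 (u m))^2
      ≤ Real.exp (L₁ * ∑ j ∈ Finset.range m, τ j) * (lpnorm 2 u₀)^2 := by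
    intro m
    induction m with
    | zero =>
      rw [hu0]
      simp
    | succ m ih =>
      have h1 := part1 m
      have h2 : (0:ℝ) ≤ 1 + L₁ * τ m := by nlinarith [(hτ m).le, hL₁.le]
      have h3 : 1 + L₁ * τ m ≤ Real.exp (L₁ * τ m) := by
        have := Real.add_one_le_exp (L₁ * τ m)
        linarith
      have h4 : (lpnorm 2 (u (m+1)))^2
          ≤ (1 + L₁ * τ m) * (Real.exp (L₁ * ∑ j ∈ Finset.range m, τ j) * (lpnorm 2 u₀)^2) :=
        h1.trans (mul_le_mul_of_nonneg_left ih h2)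
      refine h4.trans ?_
      rw [Finset.sum_range_succ, mul_add, Real.exp_add]
      have h5 : (0:ℝ) ≤ Real.exp (L₁ * ∑ j ∈ Finset.range m, τ j) * (lpnorm 2 u₀)^2 :=
        mul_nonneg (Real.exp_nonneg _) (sq_nonneg _)
      calc (1 + L₁ * τ m) * (Real.exp (L₁ * ∑ j ∈ Finset.range m, τ j) * (lpnorm 2 u₀)^2)
          ≤ Real.exp (L₁ * τ m) * (Real.exp (L₁ * ∑ j ∈ Finset.range m, τ j) * (lpnorm 2 u₀)^2) :=
            mul_le_mul_of_nonneg_right h3 h5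
        _ = Real.exp (L₁ * ∑ j ∈ Finset.range m, τ j) * Real.exp (L₁ * τ m) * (lpnorm 2 u₀)^2 := by
            ring
  intro m hm
  refine (key m).trans ?_
  have hle : Real.exp (L₁ * ∑ j ∈ Finset.range m, τ j) ≤ Real.exp (L₁ * T) :=
    Real.exp_le_exp.mpr (mul_le_mul_of_nonneg_left hm hL₁.le)
  exact mul_le_mul_of_nonneg_right hle (sq_nonneg _)
end
end

section
/- Let λ ∈ {1,−1}, L₁, T > 0, N ≥ 1 and w₀ ∈ ℍ_N. Let (τ_m)_{m≥0} be positive reals with partial sums t_m = τ₀ + ⋯ + τ_{m−1}, and let (w_m)_{m≥0} in ℍ_N be such that, for each m, w_{m+1} = ω_m(t_{m+1}) where ω_m : [t_m, t_{m+1}] → ℍ_N is a differentiable curve with ω_m(t_m) = S^N(τ_m)(w_m + iλτ_m|w_m|²w_m) and ω_m′(t) = −i P^N(ω_m(t)·ν(t)) for some real-valued ν(t) ∈ L^∞((0,1);ℝ). If τ_m‖w_m‖⁶_{L⁶(0,1)} ≤ L₁‖w_m‖² for all m, then for every m with t_m ≤ T one has ‖w_m‖² ≤ e^{L₁T}‖w₀‖².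 -/
open MeasureTheory Complex Real Set
open scoped ENNReal

noncomputable section

namespace Stmt13

instance : IsFiniteMeasure μ01 := by
  constructor
  rw [μ01, Measure.restrict_apply_univ, Real.volume_Ioo]
  norm_num

lemma eFun_cont (k : ℕ) : Continuous (eFun k) := by
  refine Complex.continuous_ofReal.comp ?_
  exact continuous_const.mul (Real.continuous_sin.comp (continuous_const.mul continuous_id))

lemma eFun_bound (k : ℕ) (x : ℝ) : ‖eFun k x‖ ≤ 2 := by
  have h2 : Real.sqrt 2 ≤ 2 := by
    nlinarith [Real.sq_sqrt (by norm_num : (0:ℝ) ≤ 2), Real.sqrt_nonneg 2]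
  have := Real.neg_one_le_sin (k * Real.pi * x)
  have := Real.sin_le_one (k * Real.pi * x)
  rw [eFun, Complex.norm_real, Real.norm_eq_abs, abs_mul,
    _root_.abs_of_nonneg (Real.sqrt_nonneg 2)]
  calc Real.sqrt 2 * |Real.sin (k * Real.pi * x)| ≤ 2 * 1 := by
        apply mul_le_mul h2 (abs_le.2 ⟨by linarith, by linarith⟩) (abs_nonneg _) (by norm_num)
    _ = 2 := by norm_num

lemma memLp_eFun (k : ℕ) (p : ℝ≥0∞) : MemLp (eFun k) p μ01 :=
  MemLp.of_bound (eFun_cont k).aestronglyMeasurable 2 (ae_of_all _ (eFun_bound k))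

lemma integral_cos_mul {c : ℝ} (hc : c ≠ 0) :
    ∫ x in (0:ℝ)..1, Real.cos (c * x) = Real.sin c / c := by
  rw [intervalIntegral.integral_comp_mul_left Real.cos hc]
  simp [integral_cos, div_eq_inv_mul]

lemma orth_aux {k j : ℕ} (hk : 1 ≤ k) (hj : 1 ≤ j) :
    ∫ x in (0:ℝ)..1,
      (Real.sqrt 2 * Real.sin (k * Real.pi * x)) * (Real.sqrt 2 * Real.sin (j * Real.pi * x))
      = if k = j then 1 else 0 := by
  have hpt : ∀ x : ℝ,
      (Real.sqrt 2 * Real.sin (k * Real.pi * x)) * (Real.sqrt 2 * Real.sin (j * Real.pi * x))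
      = Real.cos ((((k:ℝ) - j) * Real.pi) * x) - Real.cos ((((k:ℝ) + j) * Real.pi) * x) := by
    intro x
    have e1 : (((((k:ℝ) - j) * Real.pi) * x + (((k:ℝ) + j) * Real.pi) * x)) / 2
        = (k:ℝ) * Real.pi * x := by ring
    have e2 : (((((k:ℝ) - j) * Real.pi) * x - (((k:ℝ) + j) * Real.pi) * x)) / 2
        = -((j:ℝ) * Real.pi * x) := by ring
    rw [Real.cos_sub_cos, e1, e2, Real.sin_neg]
    have h2 : Real.sqrt 2 * Real.sqrt 2 = 2 := Real.mul_self_sqrt (by norm_num)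
    linear_combination (Real.sin (k * Real.pi * x) * Real.sin (j * Real.pi * x)) * h2
  rw [intervalIntegral.integral_congr (fun x _ => hpt x)]
  have i1 : IntervalIntegrable (fun x => Real.cos ((((k:ℝ) - j) * Real.pi) * x)) volume 0 1 :=
    (Real.continuous_cos.comp (continuous_const.mul continuous_id)).intervalIntegrable _ _
  have i2 : IntervalIntegrable (fun x => Real.cos ((((k:ℝ) + j) * Real.pi) * x)) volume 0 1 :=
    (Real.continuous_cos.comp (continuous_const.mul continuous_id)).intervalIntegrable _ _
  rw [intervalIntegral.integral_sub i1 i2]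
  have hsum : ∫ x in (0:ℝ)..1, Real.cos ((((k:ℝ) + j) * Real.pi) * x) = 0 := by
    have hc : ((k:ℝ) + j) * Real.pi ≠ 0 := by
      apply mul_ne_zero _ Real.pi_ne_zero
      positivity
    rw [integral_cos_mul hc]
    have : Real.sin (((k:ℝ) + j) * Real.pi) = 0 := by
      have := Real.sin_nat_mul_pi (k + j)
      push_cast at this ⊢
      convert this using 2
    rw [this, zero_div]
  rw [hsum]
  by_cases h : k = j
  · subst h
    simp only [sub_self, zero_mul, Real.cos_zero]
    simp
  · have hc : ((k:ℝ) - j) * Real.pi ≠ 0 := by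
      apply mul_ne_zero _ Real.pi_ne_zero
      intro hkj
      apply h
      have : (k:ℝ) = j := by linarith
      exact_mod_cast this
    rw [integral_cos_mul hc]
    have : Real.sin (((k:ℝ) - j) * Real.pi) = 0 := by
      have := Real.sin_int_mul_pi ((k:ℤ) - j)
      push_cast at this ⊢
      convert this using 2
    rw [this, zero_div]
    simp [h]

lemma integral_eFun_mul {k j : ℕ} (hk : 1 ≤ k) (hj : 1 ≤ j) :
    ∫ x in Ioo (0:ℝ) 1, eFun k x * eFun j x = if k = j then (1:ℂ) else 0 := by
  have hpt : ∀ x : ℝ, eFun k x * eFun j x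
      = (((Real.sqrt 2 * Real.sin (k * Real.pi * x)) * (Real.sqrt 2 * Real.sin (j * Real.pi * x)) : ℝ) : ℂ) := by
    intro x; rw [eFun, eFun]; push_cast; ring
  calc ∫ x in Ioo (0:ℝ) 1, eFun k x * eFun j x
      = ∫ x in Ioo (0:ℝ) 1, (((Real.sqrt 2 * Real.sin (k * Real.pi * x)) * (Real.sqrt 2 * Real.sin (j * Real.pi * x)) : ℝ) : ℂ) := by
        exact integral_congr_ae (ae_of_all _ (fun x => hpt x))
    _ = ((∫ x in Ioo (0:ℝ) 1, (Real.sqrt 2 * Real.sin (k * Real.pi * x)) * (Real.sqrt 2 * Real.sin (j * Real.pi * x)) : ℝ) : ℂ) :=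
        integral_ofReal
    _ = if k = j then (1:ℂ) else 0 := by
        rw [← MeasureTheory.integral_Ioc_eq_integral_Ioo,
          ← intervalIntegral.integral_of_le (by norm_num : (0:ℝ) ≤ 1), orth_aux hk hj]
        split_ifs <;> norm_num

/-- trig polynomials -/
def TP (N : ℕ) (c : ℕ → ℂ) : ℝ → ℂ := fun x => ∑ k ∈ Finset.Icc 1 N, c k * eFun k x

lemma TP_cont (N : ℕ) (c : ℕ → ℂ) : Continuous (TP N c) := by
  apply continuous_finset_sum
  exact fun k _ => continuous_const.mul (eFun_cont k)

lemma TP_bound (N : ℕ) (c : ℕ → ℂ) (x : ℝ) :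
    ‖TP N c x‖ ≤ ∑ k ∈ Finset.Icc 1 N, ‖c k‖ * 2 := by
  refine (norm_sum_le _ _).trans ?_
  apply Finset.sum_le_sum
  intro k _
  rw [norm_mul]
  exact mul_le_mul_of_nonneg_left (eFun_bound k x) (norm_nonneg _)

lemma memLp_TP (N : ℕ) (c : ℕ → ℂ) (p : ℝ≥0∞) : MemLp (TP N c) p μ01 :=
  MemLp.of_bound (TP_cont N c).aestronglyMeasurable _ (ae_of_all _ (TP_bound N c))

lemma integrable_TP_mul_eFun (N : ℕ) (c : ℕ → ℂ) (k : ℕ) :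
    Integrable (fun x => TP N c x * eFun k x) μ01 := by
  rw [← memLp_one_iff_integrable]
  refine MemLp.of_bound ((TP_cont N c).mul (eFun_cont k)).aestronglyMeasurable
    ((∑ j ∈ Finset.Icc 1 N, ‖c j‖ * 2) * 2) (ae_of_all _ (fun x => ?_))
  rw [norm_mul]
  exact mul_le_mul (TP_bound N c x) (eFun_bound k x) (norm_nonneg _)
    (Finset.sum_nonneg fun j _ => by positivity)

lemma coeff_TP (N : ℕ) (c : ℕ → ℂ) {j : ℕ} (hj : j ∈ Finset.Icc 1 N) :
    coeff j (TP N c) = c j := by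
  rw [coeff]
  have : ∀ x, TP N c x * eFun j x = ∑ k ∈ Finset.Icc 1 N, c k * (eFun k x * eFun j x)  := by
    intro x; rw [TP, Finset.sum_mul]; exact Finset.sum_congr rfl fun k _ => by ring
  rw [integral_congr_ae (ae_of_all _ this), integral_finset_sum]
  · have h1 : ∀ k ∈ Finset.Icc 1 N,
        (∫ x in Ioo (0:ℝ) 1, c k * (eFun k x * eFun j x)) = if k = j then c k else 0 := by
      intro k hk
      rw [integral_const_mul, integral_eFun_mul (Finset.mem_Icc.1 hk).1 (Finset.mem_Icc.1 hj).1]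
      split_ifs <;> simp
    rw [Finset.sum_congr rfl h1, Finset.sum_ite_eq' (Finset.Icc 1 N) j (fun k => c k)]
    simp [hj]
  · intro k hk
    exact ((memLp_one_iff_integrable).1 (MemLp.of_bound
        ((continuous_const.mul ((eFun_cont k).mul (eFun_cont j))).aestronglyMeasurable)
        (‖c k‖ * (2 * 2)) (ae_of_all _ (fun x => by
          rw [norm_mul, norm_mul]
          exact mul_le_mul_of_nonneg_left
            (mul_le_mul (eFun_bound k x) (eFun_bound j x) (norm_nonneg _) (by norm_num))
            (norm_nonneg _)))))

/-- L² space and the orthonormal family -/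
abbrev E2 := Lp ℂ 2 μ01

def ek (k : ℕ) : E2 := (memLp_eFun k 2).toLp (eFun k)

lemma inner_toLp {f g : ℝ → ℂ} (hf : MemLp f 2 μ01) (hg : MemLp g 2 μ01) :
    (inner ℂ (hf.toLp f) (hg.toLp g) : ℂ) = ∫ x in Ioo (0:ℝ) 1, (starRingEnd ℂ) (f x) * g x := by
  rw [L2.inner_def]
  rw [show μ01 = volume.restrict (Ioo (0:ℝ) 1) from rfl] at *
  refine integral_congr_ae ?_
  filter_upwards [hf.coeFn_toLp, hg.coeFn_toLp] with x h1 h2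
  rw [RCLike.inner_apply']; exact congr_arg₂ (fun a b => (starRingEnd ℂ) a * b) h1 h2

lemma inner_ek {k j : ℕ} (hk : 1 ≤ k) (hj : 1 ≤ j) :
    (inner ℂ (ek k) (ek j) : ℂ) = if k = j then 1 else 0 := by
  rw [ek, ek, inner_toLp]
  rw [← integral_eFun_mul hk hj]
  refine integral_congr_ae (ae_of_all _ (fun x => ?_))
  simp only [eFun, Complex.conj_ofReal]

lemma toLp_TP (N : ℕ) (c : ℕ → ℂ) {f : ℝ → ℂ} (hf : MemLp f 2 μ01) (hfTP : f = TP N c) :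
    hf.toLp f = ∑ k ∈ Finset.Icc 1 N, c k • ek k := by
  subst hfTP
  apply Lp.ext
  have hsum : ⇑(∑ k ∈ Finset.Icc 1 N, c k • ek k) =ᵐ[μ01]
      fun x => ∑ k ∈ Finset.Icc 1 N, c k * eFun k x := by
    classical
    induction (Finset.Icc 1 N) using Finset.induction_on with
    | empty =>
      simp only [Finset.sum_empty]
      filter_upwards [Lp.coeFn_zero ℂ 2 μ01] with x hx
      simpa using hx
    | insert _ _ hx ih =>
      rename_i a s
      rw [Finset.sum_insert hx]
      filter_upwards [Lp.coeFn_add (c a • ek a) (∑ k ∈ s, c k • ek k),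
        Lp.coeFn_smul (c a) (ek a), (memLp_eFun a 2).coeFn_toLp, ih] with x h1 h2 h3 h4
      simp only [Finset.sum_insert hx, h1, Pi.add_apply, h2, Pi.smul_apply, smul_eq_mul, h4]
      have h3' : (↑↑(ek a) : ℝ → ℂ) x = eFun a x := h3
      rw [h3']
  filter_upwards [(memLp_TP N c 2).coeFn_toLp, hsum] with x h1 h2
  rw [h1, h2]; rfl

/-- indexed orthonormal family -/
def eIdx (N : ℕ) : {k : ℕ // k ∈ Finset.Icc 1 N} → E2 := fun k => ek k.1

lemma orthonormal_eIdx (N : ℕ) : Orthonormal ℂ (eIdx N) := by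
  rw [orthonormal_iff_ite]
  intro i j
  rw [eIdx, eIdx, inner_ek (Finset.mem_Icc.1 i.2).1 (Finset.mem_Icc.1 j.2).1]
  by_cases h : i = j
  · simp [h]
  · have : i.1 ≠ j.1 := fun hc => h (Subtype.ext hc)
    simp [h, this]

lemma sum_attach_eq (N : ℕ) (g : ℕ → E2) :
    ∑ k ∈ Finset.Icc 1 N, g k = ∑ i : {k : ℕ // k ∈ Finset.Icc 1 N}, g i.1 := by
  rw [← Finset.sum_coe_sort (Finset.Icc 1 N) g]

lemma norm_comb_sq (N : ℕ) (c : ℕ → ℂ) :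
    ‖∑ k ∈ Finset.Icc 1 N, c k • ek k‖ ^ 2 = ∑ k ∈ Finset.Icc 1 N, ‖c k‖ ^ 2 := by
  have h1 : ∑ k ∈ Finset.Icc 1 N, c k • ek k
      = ∑ i : {k : ℕ // k ∈ Finset.Icc 1 N}, c i.1 • eIdx N i := sum_attach_eq N _
  rw [h1, InnerProductSpace.norm_sq_eq_re_inner (𝕜 := ℂ)]
  rw [(orthonormal_eIdx N).inner_sum (fun i => c i.1) (fun i => c i.1) Finset.univ]
  rw [← Finset.sum_coe_sort (Finset.Icc 1 N) (fun k => ‖c k‖ ^ 2)]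
  rw [map_sum]
  congr 1
  ext i
  rw [show ((starRingEnd ℂ) (c i.1) * c i.1) = ((‖c i.1‖^2 : ℝ) : ℂ) by
    rw [mul_comm, Complex.mul_conj, Complex.normSq_eq_norm_sq]]
  rw [show RCLike.re (((‖c i.1‖^2 : ℝ) : ℂ)) = ((‖c i.1‖^2 : ℝ) : ℂ).re from rfl, Complex.ofReal_re]

lemma coeff_as_inner {f : ℝ → ℂ} (hf : MemLp f 2 μ01) (k : ℕ) :
    (inner ℂ (ek k) (hf.toLp f) : ℂ) = coeff k f := by
  rw [ek, inner_toLp, coeff]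
  refine integral_congr_ae (ae_of_all _ (fun x => ?_))
  simp only [eFun, Complex.conj_ofReal]
  ring

lemma bessel (N : ℕ) {f : ℝ → ℂ} (hf : MemLp f 2 μ01) :
    ∑ k ∈ Finset.Icc 1 N, ‖coeff k f‖ ^ 2 ≤ ‖hf.toLp f‖ ^ 2 := by
  have := (orthonormal_eIdx N).sum_inner_products_le (hf.toLp f) (s := Finset.univ)
  rw [← Finset.sum_coe_sort (Finset.Icc 1 N) (fun k => ‖coeff k f‖ ^ 2)]
  refine le_trans (le_of_eq ?_) this
  congr 1
  ext i
  rw [eIdx, coeff_as_inner hf]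

lemma lpnorm_toLp {f : ℝ → ℂ} (hf : MemLp f 2 μ01) : lpnorm 2 f = ‖hf.toLp f‖ :=
  (Lp.norm_toLp f hf).symm

/-- SN contraction -/
lemma norm_SN_le (N : ℕ) (τ : ℝ) {v : ℝ → ℂ} (hv : MemLp v 2 μ01)
    (hSN : MemLp (SN N τ v) 2 μ01) :
    lpnorm 2 (SN N τ v) ^ 2 ≤ lpnorm 2 v ^ 2 := by
  rw [lpnorm_toLp hSN, lpnorm_toLp hv]
  rw [toLp_TP N (fun k => Complex.exp (-Complex.I * (((k:ℝ)^2 * Real.pi^2 * τ : ℝ) : ℂ)) * coeff k v) hSN rfl]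
  rw [norm_comb_sq]
  refine le_trans (le_of_eq ?_) (bessel N hv)
  refine Finset.sum_congr rfl (fun k _ => ?_)
  rw [norm_mul]
  have : ‖Complex.exp (-Complex.I * (((k:ℝ)^2 * Real.pi^2 * τ : ℝ) : ℂ))‖ = 1 := by
    rw [Complex.norm_exp]
    have h0 : (-Complex.I * (((k:ℝ)^2 * Real.pi^2 * τ : ℝ) : ℂ)).re = 0 := by
      simp only [Complex.mul_re, Complex.neg_re, Complex.neg_im, Complex.I_re, Complex.I_im,
        Complex.ofReal_re, Complex.ofReal_im]
      ring
    rw [h0, Real.exp_zero]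
  rw [this, one_mul]

lemma lpnorm_pow_eq {n : ℕ} (hn : 0 < n) {p : ℝ≥0∞} (hpn : p = (n : ℝ≥0∞)) {f : ℝ → ℂ}
    (hf : MemLp f p μ01) :
    lpnorm p f ^ n = ∫ x in Ioo (0:ℝ) 1, ‖f x‖ ^ n := by
  subst hpn
  have hn0 : ((n : ℝ≥0∞)) ≠ 0 := by exact_mod_cast Nat.cast_ne_zero.2 hn.ne'
  have hnt : ((n : ℝ≥0∞)) ≠ ⊤ := ENNReal.natCast_ne_top n
  have h := hf.eLpNorm_eq_integral_rpow_norm hn0 hnt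
  have htr : ((n : ℝ≥0∞)).toReal = (n : ℝ) := by simp
  have hpt : ∀ x : ℝ, ‖f x‖ ^ ((n : ℝ≥0∞)).toReal = ‖f x‖ ^ n := by
    intro x; rw [htr, Real.rpow_natCast]
  have hint : (∫ x, ‖f x‖ ^ ((n : ℝ≥0∞)).toReal ∂μ01) = ∫ x in Ioo (0:ℝ) 1, ‖f x‖ ^ n := by
    rw [show μ01 = volume.restrict (Ioo (0:ℝ) 1) from rfl] at *
    exact integral_congr_ae (ae_of_all _ hpt)
  have hX : (0:ℝ) ≤ ∫ x in Ioo (0:ℝ) 1, ‖f x‖ ^ n :=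
    integral_nonneg (fun x => by positivity)
  rw [lpnorm, h, hint, htr, ENNReal.toReal_ofReal (Real.rpow_nonneg hX _)]
  rw [← Real.rpow_natCast ((∫ x in Ioo (0:ℝ) 1, ‖f x‖ ^ n) ^ (n:ℝ)⁻¹) n,
    ← Real.rpow_mul hX, inv_mul_cancel₀ (by exact_mod_cast hn.ne' : (n:ℝ) ≠ 0), Real.rpow_one]

lemma cubic_norm (u : ℝ → ℂ) (x : ℝ) : ‖cubic u x‖ = ‖u x‖ ^ 3 := by
  rw [cubic, norm_mul, Complex.norm_real, Real.norm_eq_abs, _root_.abs_of_nonneg (by positivity)]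
  ring

lemma norm_sq_integral {f : ℝ → ℂ} (hf : MemLp f 2 μ01) :
    ‖hf.toLp f‖ ^ 2 = ∫ x in Ioo (0:ℝ) 1, ‖f x‖ ^ 2 := by
  rw [Lp.norm_toLp]
  exact lpnorm_pow_eq (by norm_num) (by norm_num) hf

/-- the quadratic expansion -/
lemma expand_step {w : ℝ → ℂ} (hw2 : MemLp w 2 μ01) (hw6 : MemLp w ((6:ℕ) : ℝ≥0∞) μ01)
    (hc2 : MemLp (cubic w) 2 μ01) (l τ : ℝ) (hl : l = 1 ∨ l = -1)
    (hv : MemLp (fun x => w x + Complex.I * l * τ * cubic w x) 2 μ01) :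
    lpnorm 2 (fun x => w x + Complex.I * l * τ * cubic w x) ^ 2
      = lpnorm 2 w ^ 2 + τ^2 * lpnorm ((6:ℕ) : ℝ≥0∞) w ^ 6 := by
  set s : ℂ := Complex.I * l * τ with hs
  have hsplit : hv.toLp _ = hw2.toLp w + s • hc2.toLp (cubic w) := by
    apply Lp.ext
    filter_upwards [hv.coeFn_toLp, hw2.coeFn_toLp, hc2.coeFn_toLp,
      Lp.coeFn_add (hw2.toLp w) (s • hc2.toLp (cubic w)),
      Lp.coeFn_smul s (hc2.toLp (cubic w))] with x h1 h2 h3 h4 h5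
    rw [h1, h4]
    simp only [Pi.add_apply, h2, h5, Pi.smul_apply, h3, smul_eq_mul]
  have hnorm : lpnorm 2 (fun x => w x + Complex.I * l * τ * cubic w x) = ‖hv.toLp _‖ :=
    (Lp.norm_toLp _ _).symm
  rw [hnorm, hsplit, @norm_add_sq ℂ]
  -- cross term
  have hip : (inner ℂ (hw2.toLp w) (s • hc2.toLp (cubic w)) : ℂ)
      = s * ((∫ x in Ioo (0:ℝ) 1, ‖w x‖ ^ 4 : ℝ) : ℂ) := by
    rw [inner_smul_right, inner_toLp hw2 hc2]
    congr 1
    have hpt : ∀ x : ℝ, (starRingEnd ℂ) (w x) * cubic w x = ((‖w x‖ ^ 4 : ℝ) : ℂ) := by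
      intro x
      rw [cubic]
      rw [show (starRingEnd ℂ) (w x) * (((‖w x‖ ^ 2 : ℝ) : ℂ) * w x)
          = ((‖w x‖ ^ 2 : ℝ) : ℂ) * ((starRingEnd ℂ) (w x) * w x) by ring]
      rw [show (starRingEnd ℂ) (w x) * w x = ((‖w x‖ ^ 2 : ℝ) : ℂ) by
        rw [mul_comm, Complex.mul_conj, Complex.normSq_eq_norm_sq]]
      rw [← Complex.ofReal_mul]
      norm_num
      ring
    rw [integral_congr_ae (ae_of_all _ hpt)]
    exact integral_ofReal
  have hre : RCLike.re (inner ℂ (hw2.toLp w) (s • hc2.toLp (cubic w)) : ℂ) = 0 := by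
    rw [hip, hs]
    have : (Complex.I * l * τ * ((∫ x in Ioo (0:ℝ) 1, ‖w x‖ ^ 4 : ℝ) : ℂ)).re = 0 := by
      simp only [Complex.mul_re, Complex.I_re, Complex.I_im, Complex.ofReal_re,
        Complex.ofReal_im, Complex.mul_im]
      ring
    exact this
  rw [hre]
  -- norms
  have hslen : ‖s‖ = |τ| := by
    rw [hs, norm_mul, norm_mul, Complex.norm_I, Complex.norm_real, Complex.norm_real,
      Real.norm_eq_abs, Real.norm_eq_abs]
    rcases hl with h | h <;> rw [h] <;> norm_num
  have hC : ‖hc2.toLp (cubic w)‖ ^ 2 = lpnorm ((6:ℕ) : ℝ≥0∞) w ^ 6 := by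
    rw [norm_sq_integral hc2, lpnorm_pow_eq (by norm_num : 0 < 6) rfl hw6]
    refine integral_congr_ae (ae_of_all _ (fun x => ?_))
    show ‖cubic w x‖ ^ 2 = ‖w x‖ ^ 6
    rw [cubic_norm]
    ring
  rw [norm_smul, mul_pow, hslen, hC, _root_.sq_abs]
  have hW : ‖hw2.toLp w‖ = lpnorm 2 w := Lp.norm_toLp w hw2
  rw [hW]
  ring

/-- the projection onto span of e_1..e_N as a CLM -/
def Pproj (N : ℕ) : E2 →L[ℂ] E2 :=
  ∑ k ∈ Finset.Icc 1 N, (innerSL ℂ (ek k)).smulRight (ek k)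

lemma Pproj_apply (N : ℕ) (x : E2) :
    Pproj N x = ∑ k ∈ Finset.Icc 1 N, (inner ℂ (ek k) x : ℂ) • ek k := by
  rw [Pproj, ContinuousLinearMap.sum_apply]
  rfl

lemma inner_ek_comb (N : ℕ) (c : ℕ → ℂ) {k : ℕ} (hk : k ∈ Finset.Icc 1 N) :
    (inner ℂ (ek k) (∑ j ∈ Finset.Icc 1 N, c j • ek j) : ℂ) = c k := by
  rw [inner_sum]
  have h1 : ∀ j ∈ Finset.Icc 1 N,
      (inner ℂ (ek k) (c j • ek j) : ℂ) = if j = k then c j else 0 := by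
    intro j hj
    rw [inner_smul_right, inner_ek (Finset.mem_Icc.1 hk).1 (Finset.mem_Icc.1 hj).1]
    by_cases h : j = k
    · simp [h]
    · simp [h, Ne.symm h]
  rw [Finset.sum_congr rfl h1, Finset.sum_ite_eq' (Finset.Icc 1 N) k c]
  simp [hk]

lemma Pproj_comb (N : ℕ) (c : ℕ → ℂ) :
    Pproj N (∑ k ∈ Finset.Icc 1 N, c k • ek k) = ∑ k ∈ Finset.Icc 1 N, c k • ek k := by
  rw [Pproj_apply]
  exact Finset.sum_congr rfl fun k hk => by rw [inner_ek_comb N c hk]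

lemma inner_comb_comb (N : ℕ) (d c : ℕ → ℂ) :
    (inner ℂ (∑ k ∈ Finset.Icc 1 N, d k • ek k) (∑ k ∈ Finset.Icc 1 N, c k • ek k) : ℂ)
      = ∑ k ∈ Finset.Icc 1 N, (starRingEnd ℂ) (d k) * c k := by
  have h1 : ∑ k ∈ Finset.Icc 1 N, d k • ek k
      = ∑ i : {k : ℕ // k ∈ Finset.Icc 1 N}, d i.1 • eIdx N i := sum_attach_eq N _
  have h2 : ∑ k ∈ Finset.Icc 1 N, c k • ek k
      = ∑ i : {k : ℕ // k ∈ Finset.Icc 1 N}, c i.1 • eIdx N i := sum_attach_eq N _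
  rw [h1, h2, (orthonormal_eIdx N).inner_sum (fun i => d i.1) (fun i => c i.1) Finset.univ]
  rw [← Finset.sum_coe_sort (Finset.Icc 1 N) (fun k => (starRingEnd ℂ) (d k) * c k)]

/-- main conservation lemma -/
lemma conservation (N : ℕ) (a b : ℝ) (hab : a ≤ b)
    (ω : ℝ → ℝ → ℂ) (ν : ℝ → ℝ → ℝ)
    (hν : ∀ s, MemLp (ν s) ∞ μ01)
    (hωL : ∀ s, MemLp (ω s) 2 μ01)
    (hDL : ∀ s, MemLp
      (fun x => -Complex.I * PN N (fun z => ω s z * ((ν s z : ℝ) : ℂ)) x) 2 μ01)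
    (hderiv : ∀ s ∈ Icc a b, HasDerivWithinAt (fun r => (hωL r).toLp (ω r))
      ((hDL s).toLp _) (Icc a b) s)
    (c₀ : ℕ → ℂ) (hinit : ω a = TP N c₀) :
    ‖(hωL b).toLp (ω b)‖ = ‖(hωL a).toLp (ω a)‖ := by
  classical
  set F : ℝ → E2 := fun r => (hωL r).toLp (ω r) with hF
  set D : ℝ → E2 := fun s => (hDL s).toLp _ with hD
  -- D s is a combination
  have D_eq : ∀ s, D s = ∑ k ∈ Finset.Icc 1 N,
      (-Complex.I * coeff k (fun z => ω s z * ((ν s z : ℝ) : ℂ))) • ek k := by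
    intro s
    refine toLp_TP N _ (hDL s) ?_
    funext x
    rw [TP, PN, Finset.mul_sum]
    exact Finset.sum_congr rfl fun k _ => by ring
  have hFderiv := hderiv
  -- the deviation from the span is constant (zero)
  have hPF : ∀ s ∈ Icc a b, HasDerivWithinAt (fun r => Pproj N (F r)) (Pproj N (D s))
      (Icc a b) s := fun s hs =>
    (((Pproj N).restrictScalars ℝ).hasFDerivAt).comp_hasDerivWithinAt s (hFderiv s hs)
  have hGderiv : ∀ s ∈ Icc a b,
      HasDerivWithinAt (fun r => F r - Pproj N (F r)) 0 (Icc a b) s := by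
    intro s hs
    have h0 : D s - Pproj N (D s) = 0 := by
      rw [D_eq s, Pproj_comb, sub_self]
    exact h0 ▸ ((hFderiv s hs).sub (hPF s hs))
  have hGcont : ContinuousOn (fun r => F r - Pproj N (F r)) (Icc a b) :=
    fun s hs => ((hGderiv s hs).continuousWithinAt)
  have hGconst : ∀ s ∈ Icc a b, F s - Pproj N (F s) = F a - Pproj N (F a) :=
    constant_of_has_deriv_right_zero hGcont (fun x hx =>
      (hGderiv x (Ico_subset_Icc_self hx)).mono_of_mem_nhdsWithin (Icc_mem_nhdsGE_of_mem hx))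
  have hFa : F a = ∑ k ∈ Finset.Icc 1 N, c₀ k • ek k := toLp_TP N c₀ (hωL a) hinit
  have hGa : F a - Pproj N (F a) = 0 := by rw [hFa, Pproj_comb, sub_self]
  have hFP : ∀ s ∈ Icc a b, F s = Pproj N (F s) := by
    intro s hs
    have := (hGconst s hs).trans hGa
    exact sub_eq_zero.1 this
  -- the key orthogonality: re ⟪D s, F s⟫ = 0
  have hkey : ∀ s ∈ Icc a b, (inner ℂ (D s) (F s) : ℂ).re = 0 := by
    intro s hs
    set c : ℕ → ℂ := fun k => (inner ℂ (ek k) (F s) : ℂ) with hc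
    have hFcomb : F s = ∑ k ∈ Finset.Icc 1 N, c k • ek k := by
      rw [hFP s hs, Pproj_apply]
    set u : ℝ → ℂ := TP N c with hu
    have hucont : Continuous u := TP_cont N c
    have hae : ω s =ᵐ[μ01] u := by
      have h1 : (hωL s).toLp (ω s) = (memLp_TP N c 2).toLp u := by
        rw [toLp_TP N c (memLp_TP N c 2) rfl]
        exact hFcomb
      refine ((hωL s).coeFn_toLp.symm.trans ?_).trans (memLp_TP N c 2).coeFn_toLp
      rw [h1]
    -- coefficient congruence
    have hcoeff : ∀ k, coeff k (fun z => ω s z * ((ν s z : ℝ) : ℂ))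
        = coeff k (fun z => u z * ((ν s z : ℝ) : ℂ)) := by
      intro k
      refine integral_congr_ae ?_
      filter_upwards [hae] with x hx
      rw [hx]
    -- integrability of ν
    have hνint : Integrable (fun x => ((ν s x : ℝ) : ℂ)) μ01 :=
      (memLp_one_iff_integrable.1 ((hν s).mono_exponent le_top)).ofReal
    set B : ℝ := ∑ k ∈ Finset.Icc 1 N, ‖c k‖ * 2 with hB
    have hInt : ∀ k : ℕ, Integrable
        (fun x => (starRingEnd ℂ) (u x) * ((ν s x : ℝ) : ℂ) * (c k * eFun k x)) μ01 := by
      intro k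
      have heq : (fun x => (starRingEnd ℂ) (u x) * ((ν s x : ℝ) : ℂ) * (c k * eFun k x))
          = fun x => ((starRingEnd ℂ) (u x) * (c k * eFun k x)) * ((ν s x : ℝ) : ℂ) :=
        funext fun x => by ring
      rw [heq]
      refine hνint.bdd_mul (c := B * (‖c k‖ * 2)) ?_ (ae_of_all _ fun x => ?_)
      · exact ((continuous_star.comp hucont).mul
          (continuous_const.mul (eFun_cont k))).aestronglyMeasurable
      · rw [norm_mul, norm_mul]
        have h1 : ‖(starRingEnd ℂ) (u x)‖ = ‖u x‖ := norm_star _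
        rw [h1]
        have hBnn : (0:ℝ) ≤ ‖c k‖ * 2 := by positivity
        refine mul_le_mul (TP_bound N c x) ?_ (by positivity) ?_
        · exact mul_le_mul_of_nonneg_left (eFun_bound k x) (norm_nonneg _)
        · refine le_trans (norm_nonneg _) (TP_bound N c 0)
    -- compute inner ℂ (D s) (F s)
    have hDF : (inner ℂ (D s) (F s) : ℂ)
        = Complex.I * ((∫ x in Ioo (0:ℝ) 1, ν s x * ‖u x‖^2 : ℝ) : ℂ) := by
      rw [D_eq s, hFcomb, inner_comb_comb]
      have hterm : ∀ k ∈ Finset.Icc 1 N,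
          (starRingEnd ℂ) (-Complex.I * coeff k (fun z => ω s z * ((ν s z : ℝ) : ℂ))) * c k
          = Complex.I * ∫ x in Ioo (0:ℝ) 1,
              (starRingEnd ℂ) (u x) * ((ν s x : ℝ) : ℂ) * (c k * eFun k x) := by
        intro k hk
        rw [hcoeff k, map_mul]
        have h1 : (starRingEnd ℂ) (-Complex.I) = Complex.I := by simp
        rw [h1]
        have h2 : (starRingEnd ℂ) (coeff k (fun z => u z * ((ν s z : ℝ) : ℂ)))
            = ∫ x in Ioo (0:ℝ) 1, (starRingEnd ℂ) (u x) * ((ν s x : ℝ) : ℂ) * eFun k x := by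
          rw [coeff, ← integral_conj]
          refine integral_congr_ae (ae_of_all _ (fun x => ?_))
          dsimp only
          rw [map_mul, map_mul]
          rw [show (starRingEnd ℂ) (eFun k x) = eFun k x by
            simp only [eFun, Complex.conj_ofReal]]
          rw [show (starRingEnd ℂ) (((ν s x : ℝ) : ℂ)) = ((ν s x : ℝ) : ℂ) from
            Complex.conj_ofReal _]
        rw [h2]
        rw [mul_assoc]
        congr 1
        rw [← integral_mul_const]
        refine integral_congr_ae (ae_of_all _ (fun x => ?_))
        dsimp only
        ring
      rw [Finset.sum_congr rfl hterm, ← Finset.mul_sum]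
      congr 1
      have hpt : ∀ x : ℝ, (∑ k ∈ Finset.Icc 1 N,
          (starRingEnd ℂ) (u x) * ((ν s x : ℝ) : ℂ) * (c k * eFun k x))
          = ((ν s x * ‖u x‖^2 : ℝ) : ℂ) := by
        intro x
        rw [← Finset.mul_sum]
        have husum : ∑ k ∈ Finset.Icc 1 N, c k * eFun k x = u x := rfl
        rw [husum]
        rw [show (starRingEnd ℂ) (u x) * ((ν s x : ℝ) : ℂ) * u x
            = ((ν s x : ℝ) : ℂ) * ((starRingEnd ℂ) (u x) * u x) by ring]
        rw [show (starRingEnd ℂ) (u x) * u x = ((‖u x‖ ^ 2 : ℝ) : ℂ) by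
          rw [mul_comm, Complex.mul_conj, Complex.normSq_eq_norm_sq]]
        rw [← Complex.ofReal_mul]
      calc ∑ k ∈ Finset.Icc 1 N, ∫ x in Ioo (0:ℝ) 1,
              (starRingEnd ℂ) (u x) * ((ν s x : ℝ) : ℂ) * (c k * eFun k x)
          = ∫ x in Ioo (0:ℝ) 1, ∑ k ∈ Finset.Icc 1 N,
              (starRingEnd ℂ) (u x) * ((ν s x : ℝ) : ℂ) * (c k * eFun k x) :=
            (integral_finset_sum _ (fun k _ => hInt k)).symm
        _ = ∫ x in Ioo (0:ℝ) 1, ((ν s x * ‖u x‖^2 : ℝ) : ℂ) :=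
            integral_congr_ae (ae_of_all _ hpt)
        _ = ((∫ x in Ioo (0:ℝ) 1, ν s x * ‖u x‖^2 : ℝ) : ℂ) := by exact integral_ofReal
    rw [hDF]
    simp only [Complex.mul_re, Complex.I_re, Complex.I_im, Complex.ofReal_re,
      Complex.ofReal_im]
    ring
  -- now integrate the derivative of ‖F‖²
  have hg : ∀ s ∈ Icc a b, HasDerivWithinAt (fun r => RCLike.re (inner ℂ (F r) (F r) : ℂ))
      0 (Icc a b) s := by
    intro s hs
    have hinner : HasDerivWithinAt (fun r => (inner ℂ (F r) (F r) : ℂ))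
        ((inner ℂ (F s) (D s) : ℂ) + (inner ℂ (D s) (F s) : ℂ)) (Icc a b) s :=
      HasDerivWithinAt.inner ℂ (hFderiv s hs) (hFderiv s hs)
    have hcomp := (Complex.reCLM.hasFDerivAt).comp_hasDerivWithinAt s hinner
    have hval : Complex.reCLM ((inner ℂ (F s) (D s) : ℂ) + (inner ℂ (D s) (F s) : ℂ)) = 0 := by
      have h1 : (inner ℂ (F s) (D s) : ℂ) = (starRingEnd ℂ) (inner ℂ (D s) (F s) : ℂ) :=
        (inner_conj_symm _ _).symm
      simp only [Complex.reCLM_apply, Complex.add_re, h1, Complex.conj_re]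
      rw [hkey s hs]
      norm_num
    rw [hval] at hcomp
    exact hcomp
  have hgcont : ContinuousOn (fun r => RCLike.re (inner ℂ (F r) (F r) : ℂ)) (Icc a b) :=
    fun s hs => (hg s hs).continuousWithinAt
  have hconst := constant_of_has_deriv_right_zero hgcont (fun x hx =>
    (hg x (Ico_subset_Icc_self hx)).mono_of_mem_nhdsWithin (Icc_mem_nhdsGE_of_mem hx))
  have hb := hconst b (right_mem_Icc.2 hab)
  have hsq : ‖F b‖^2 = ‖F a‖^2 := by
    rw [InnerProductSpace.norm_sq_eq_re_inner (𝕜 := ℂ), InnerProductSpace.norm_sq_eq_re_inner (𝕜 := ℂ)]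
    exact hb
  rw [← Real.sqrt_sq (norm_nonneg (F b)), ← Real.sqrt_sq (norm_nonneg (F a)), hsq]

end Stmt13

/-- mass bound for the iterates of the skeleton equation (Proposition 4.2). -/
theorem stmt13 (l : ℝ) (hl : l = 1 ∨ l = -1) (L₁ T : ℝ) (hL₁ : 0 < L₁) (hT : 0 < T)
    (N : ℕ) (hN : 1 ≤ N) (w₀ : ℝ → ℂ) (hw₀ : w₀ ∈ HN N)
    (τ : ℕ → ℝ) (hτ : ∀ m, 0 < τ m)
    (t : ℕ → ℝ) (ht : ∀ m, t m = ∑ j ∈ Finset.range m, τ j)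
    (w : ℕ → ℝ → ℂ) (hw0 : w 0 = w₀) (hwHN : ∀ m, w m ∈ HN N)
    (ν : ℝ → ℝ → ℝ) (hν : ∀ s, MemLp (ν s) ∞ μ01)
    (ω : ℕ → ℝ → ℝ → ℂ)
    (hωL : ∀ m s, MemLp (ω m s) 2 μ01)
    (hDL : ∀ m s, MemLp
      (fun x => -Complex.I * PN N (fun z => ω m s z * ((ν s z : ℝ) : ℂ)) x) 2 μ01)
    (hω_init : ∀ m, ω m (t m)
      = SN N (τ m) (fun x => w m x + Complex.I * l * τ m * cubic (w m) x))
    (hω_deriv : ∀ m, ∀ s ∈ Set.Icc (t m) (t (m+1)),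
      HasDerivWithinAt (fun r => (hωL m r).toLp (ω m r))
        ((hDL m s).toLp (fun x => -Complex.I * PN N (fun z => ω m s z * ((ν s z : ℝ) : ℂ)) x))
        (Set.Icc (t m) (t (m+1))) s)
    (hω_end : ∀ m, w (m+1) = ω m (t (m+1)))
    (hstep : ∀ m, τ m * (lpnorm 6 (w m))^6 ≤ L₁ * (lpnorm 2 (w m))^2) :
    ∀ m, t m ≤ T → (lpnorm 2 (w m))^2 ≤ Real.exp (L₁ * T) * (lpnorm 2 w₀)^2 := by
  have hstep2 : ∀ m, lpnorm 2 (w (m+1)) ^ 2 ≤ (1 + L₁ * τ m) * lpnorm 2 (w m) ^ 2 := by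
    intro m
    obtain ⟨c, hc⟩ := hwHN m
    have hc' : w m = Stmt13.TP N c := hc
    have hw2 : MemLp (w m) 2 μ01 := by rw [hc']; exact Stmt13.memLp_TP N c 2
    have hw6 : MemLp (w m) ((6:ℕ) : ℝ≥0∞) μ01 := by rw [hc']; exact Stmt13.memLp_TP N c _
    have hwcont : Continuous (w m) := by rw [hc']; exact Stmt13.TP_cont N c
    have hbd : ∀ x, ‖w m x‖ ≤ ∑ k ∈ Finset.Icc 1 N, ‖c k‖ * 2 := by
      intro x; rw [hc']; exact Stmt13.TP_bound N c x
    set B : ℝ := ∑ k ∈ Finset.Icc 1 N, ‖c k‖ * 2 with hB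
    have hB0 : (0:ℝ) ≤ B := le_trans (norm_nonneg _) (hbd 0)
    have hccont : Continuous (cubic (w m)) := by
      show Continuous fun x => ((‖w m x‖ ^ 2 : ℝ) : ℂ) * w m x
      exact (Complex.continuous_ofReal.comp ((hwcont.norm).pow 2)).mul hwcont
    have hcbd : ∀ x, ‖cubic (w m) x‖ ≤ B ^ 3 := by
      intro x
      rw [Stmt13.cubic_norm]
      exact pow_le_pow_left₀ (norm_nonneg _) (hbd x) 3
    have hc2 : MemLp (cubic (w m)) 2 μ01 :=
      MemLp.of_bound hccont.aestronglyMeasurable _ (ae_of_all _ hcbd)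
    have hvcont : Continuous (fun x => w m x + Complex.I * l * τ m * cubic (w m) x) :=
      hwcont.add (continuous_const.mul hccont)
    have hv : MemLp (fun x => w m x + Complex.I * l * τ m * cubic (w m) x) 2 μ01 := by
      refine MemLp.of_bound hvcont.aestronglyMeasurable
        (B + ‖Complex.I * (l:ℂ) * ((τ m : ℝ):ℂ)‖ * B ^ 3) (ae_of_all _ (fun x => ?_))
      refine le_trans (norm_add_le _ _) (add_le_add (hbd x) ?_)
      rw [norm_mul]
      exact mul_le_mul_of_nonneg_left (hcbd x) (norm_nonneg _)
    have hSN : MemLp (SN N (τ m)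
        (fun x => w m x + Complex.I * l * τ m * cubic (w m) x)) 2 μ01 :=
      Stmt13.memLp_TP N _ 2
    have hab : t m ≤ t (m+1) := by
      rw [ht (m+1), ht m, Finset.sum_range_succ]
      linarith [(hτ m).le]
    have hcons := Stmt13.conservation N (t m) (t (m+1)) hab (ω m) ν hν (hωL m) (hDL m)
      (hω_deriv m)
      (fun k => Complex.exp (-Complex.I * (((k:ℝ)^2 * Real.pi^2 * τ m : ℝ) : ℂ))
        * coeff k (fun x => w m x + Complex.I * l * τ m * cubic (w m) x))
      (by rw [hω_init m]; rfl)
    have e1 : lpnorm 2 (w (m+1)) = lpnorm 2 (SN N (τ m)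
        (fun x => w m x + Complex.I * l * τ m * cubic (w m) x)) := by
      rw [hω_end m]
      have h1 : lpnorm 2 (ω m (t (m+1))) = ‖(hωL m (t (m+1))).toLp (ω m (t (m+1)))‖ :=
        (Lp.norm_toLp _ _).symm
      rw [h1, hcons, Lp.norm_toLp]
      show (eLpNorm (ω m (t m)) 2 μ01).toReal = _
      rw [hω_init m]
      rfl
    calc lpnorm 2 (w (m+1)) ^ 2
        = lpnorm 2 (SN N (τ m)
            (fun x => w m x + Complex.I * l * τ m * cubic (w m) x)) ^ 2 := by rw [e1]
      _ ≤ lpnorm 2 (fun x => w m x + Complex.I * l * τ m * cubic (w m) x) ^ 2 :=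
          Stmt13.norm_SN_le N (τ m) hv hSN
      _ = lpnorm 2 (w m) ^ 2 + (τ m)^2 * lpnorm ((6:ℕ) : ℝ≥0∞) (w m) ^ 6 :=
          Stmt13.expand_step hw2 hw6 hc2 l (τ m) hl hv
      _ ≤ (1 + L₁ * τ m) * lpnorm 2 (w m) ^ 2 := by
          have h6 : ((6:ℕ) : ℝ≥0∞) = (6 : ℝ≥0∞) := by norm_num
          rw [h6]
          have hst := hstep m
          nlinarith [mul_le_mul_of_nonneg_left hst (hτ m).le, (hτ m).le]
  have hmain : ∀ m, lpnorm 2 (w m) ^ 2 ≤ Real.exp (L₁ * t m) * lpnorm 2 w₀ ^ 2 := by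
    intro m
    induction m with
    | zero =>
      rw [hw0, ht 0, Finset.sum_range_zero, mul_zero, Real.exp_zero, one_mul]
    | succ m ih =>
      have h3 : 1 + L₁ * τ m ≤ Real.exp (L₁ * τ m) := by
        have := Real.add_one_le_exp (L₁ * τ m); linarith
      have h4 : t (m+1) = t m + τ m := by rw [ht (m+1), ht m, Finset.sum_range_succ]
      calc lpnorm 2 (w (m+1)) ^ 2 ≤ (1 + L₁ * τ m) * lpnorm 2 (w m) ^ 2 := hstep2 m
        _ ≤ Real.exp (L₁ * τ m) * lpnorm 2 (w m) ^ 2 :=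
            mul_le_mul_of_nonneg_right h3 (sq_nonneg _)
        _ ≤ Real.exp (L₁ * τ m) * (Real.exp (L₁ * t m) * lpnorm 2 w₀ ^ 2) :=
            mul_le_mul_of_nonneg_left ih (Real.exp_nonneg _)
        _ = Real.exp (L₁ * t (m+1)) * lpnorm 2 w₀ ^ 2 := by
            rw [h4, mul_add, Real.exp_add]; ring
  intro m hm
  refine le_trans (hmain m) ?_
  have hexp : Real.exp (L₁ * t m) ≤ Real.exp (L₁ * T) :=
    Real.exp_le_exp.2 (mul_le_mul_of_nonneg_left hm hL₁.le)
  exact mul_le_mul_of_nonneg_right hexp (sq_nonneg _)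
end
end
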